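/- arXiv:1208.5242 — 3 statements merged into one kernel-verified Lean document; each statement's English description precedes it below -/
import Mathlib

section
/- Let 1 ≤ p < ∞, α ∈ ℝ, ω ∈ W_α, ψ : [0,1] → [0,∞) measurable, and s : [0,1] → ℝ measurable with |s(t)| ≥ t^β a.e. for some β > 0. If A := ∫₀¹ |s(t)|^{-(n+α)/p} ψ(t) dt < ∞, then for every f ∈ L^p(ω), the operator U_{ψ,s}f(x) = ∫₀¹ f(s(t)x) ψ(t) dt satisfies ‖U_{ψ,s}f‖_{L^p(ω)} ≤ A ‖f‖_{L^p(ω)}. -/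
open MeasureTheory Metric Set

noncomputable section

/-- The surface integral of `ω` over the unit sphere `S^{n-1}`,
with respect to the measure `σ = volume.toSphere` induced by polar coordinates. -/
def sphereInt {n : ℕ} (ω : EuclideanSpace ℝ (Fin n) → ℝ) : ℝ :=
  ∫ x : sphere (0 : EuclideanSpace ℝ (Fin n)) 1, ω x ∂((volume : Measure (EuclideanSpace ℝ (Fin n))).toSphere)

/-- `ω ∈ W_α`: a measurable, a.e. positive weight on `ℝⁿ`, absolutely homogeneous of
degree `α`, whose integral over the unit sphere is finite and positive. -/
structure IsWeight (n : ℕ) (α : ℝ) (ω : EuclideanSpace ℝ (Fin n) → ℝ) : Prop where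
  measurable : Measurable ω
  pos : ∀ᵐ x : EuclideanSpace ℝ (Fin n), 0 < ω x
  homog : ∀ t : ℝ, t ≠ 0 → ∀ x, ω (t • x) = |t| ^ α * ω x
  sphere_integrable : Integrable (fun x : sphere (0 : EuclideanSpace ℝ (Fin n)) 1 => ω x)
      ((volume : Measure (EuclideanSpace ℝ (Fin n))).toSphere)
  sphere_pos : 0 < sphereInt ω

/-- The generalized weighted Hardy–Cesàro operator
`U_{ψ,s} f(x) = ∫₀¹ f(s(t)·x) ψ(t) dt`. -/
def hardyCesaro {n : ℕ} (ψ s : ℝ → ℝ) (f : EuclideanSpace ℝ (Fin n) → ℝ)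
    (x : EuclideanSpace ℝ (Fin n)) : ℝ :=
  ∫ t in Icc (0 : ℝ) 1, f (s t • x) * ψ t

/-- The generalized weighted Cesàro operator
`V_{ψ,s} f(x) = ∫₀¹ f(s(t)·x) |s(t)|ⁿ ψ(t) dt`. -/
def cesaro {n : ℕ} (ψ s : ℝ → ℝ) (f : EuclideanSpace ℝ (Fin n) → ℝ)
    (x : EuclideanSpace ℝ (Fin n)) : ℝ :=
  ∫ t in Icc (0 : ℝ) 1, f (s t • x) * (|s t| ^ (n : ℝ) * ψ t)

/-- The weighted `L^p(ω)` norm `(∫ |f|^p ω dx)^{1/p}`. -/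
def wNorm {n : ℕ} (ω : EuclideanSpace ℝ (Fin n) → ℝ) (p : ℝ)
    (f : EuclideanSpace ℝ (Fin n) → ℝ) : ℝ :=
  (∫ x, |f x| ^ p * ω x) ^ (1 / p)

/-- Membership in the weighted Lebesgue space `L^p(ω)`. -/
def MemWLp {n : ℕ} (ω : EuclideanSpace ℝ (Fin n) → ℝ) (p : ℝ)
    (f : EuclideanSpace ℝ (Fin n) → ℝ) : Prop :=
  AEMeasurable f (volume : Measure (EuclideanSpace ℝ (Fin n))) ∧
    Integrable (fun x => |f x| ^ p * ω x)

namespace HCAux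

open Function
open scoped ENNReal

variable {X T : Type*} [MeasurableSpace X] [MeasurableSpace T]

theorem minkowski_lintegral (μ : Measure X) (ν : Measure T) [SigmaFinite μ] [SFinite ν]
    {p : ℝ} (hp : 1 ≤ p) {F : T → X → ℝ≥0∞} (hF : Measurable (Function.uncurry F)) :
    (∫⁻ x, (∫⁻ t, F t x ∂ν) ^ p ∂μ) ^ (1 / p) ≤
      ∫⁻ t, (∫⁻ x, F t x ^ p ∂μ) ^ (1 / p) ∂ν := by
  have hswapm : Measurable (Function.uncurry fun x t => F t x) := hF.comp measurable_swap
  rcases eq_or_lt_of_le hp with heq | hp1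
  · rw [← heq]
    simp only [ENNReal.rpow_one, one_div_one]
    exact le_of_eq (lintegral_lintegral_swap hswapm.aemeasurable)
  have hp0 : (0:ℝ) < p := lt_trans zero_lt_one hp1
  have hpq := Real.HolderConjugate.conjExponent hp1
  set q := Real.conjExponent p with hqdef
  have hq0 : (0:ℝ) < q := hpq.symm.pos
  set C := ∫⁻ t, (∫⁻ x, F t x ^ p ∂μ) ^ (1 / p) ∂ν with hCdef
  set I := fun x => ∫⁻ t, F t x ∂ν with hIdef
  have hI : Measurable I := hswapm.lintegral_prod_right'
  set S := spanningSets μ with hSdef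
  set m := fun (j : ℕ) (x : X) => min (I x) j with hmdef
  have hmmeas : ∀ j : ℕ, Measurable (m j) := fun j => hI.min measurable_const
  have hmtop : ∀ j x, m j x ≠ ⊤ := fun j x =>
    ne_top_of_le_ne_top (ENNReal.natCast_ne_top j) (min_le_right _ _)
  set B := fun j : ℕ => ∫⁻ x in S j, m j x ^ p ∂μ with hBdef
  have hBtop : ∀ j, B j ≠ ⊤ := by
    intro j
    have hle : B j ≤ (j:ℝ≥0∞)^p * μ (S j) := by
      calc B j ≤ ∫⁻ _ in S j, (j:ℝ≥0∞)^p ∂μ :=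
            lintegral_mono fun x => ENNReal.rpow_le_rpow (min_le_right _ _) hp0.le
        _ = (j:ℝ≥0∞)^p * μ (S j) := setLIntegral_const _ _
    exact ne_top_of_le_ne_top (ENNReal.mul_ne_top
      (ENNReal.rpow_ne_top_of_nonneg hp0.le (ENNReal.natCast_ne_top j))
      (measure_spanningSets_lt_top μ j).ne) hle
  have hkey : ∀ j, B j ^ (1/p) ≤ C := by
    intro j
    have hBle : B j ≤ C * B j ^ (1/q) := by
      have h1 : B j ≤ ∫⁻ x in S j, m j x ^ (p - 1) * I x ∂μ := by
        have e : ∀ x, m j x ^ p = m j x ^ (p-1) * m j x := by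
          intro x
          rcases eq_or_ne (m j x) 0 with h0 | h0
          · rw [h0, ENNReal.zero_rpow_of_pos hp0, mul_zero]
          · conv_lhs => rw [show p = (p-1) + 1 by ring]
            rw [ENNReal.rpow_add _ _ h0 (hmtop j x), ENNReal.rpow_one]
        calc B j = ∫⁻ x in S j, m j x ^ (p-1) * m j x ∂μ := lintegral_congr fun x => e x
          _ ≤ _ := lintegral_mono fun x => mul_le_mul_right (min_le_left _ _) _
      have h2 : ∫⁻ x in S j, m j x ^ (p-1) * I x ∂μ
          = ∫⁻ t, ∫⁻ x in S j, m j x ^ (p-1) * F t x ∂μ ∂ν := by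
        have e1 : ∀ x, m j x ^ (p-1) * I x = ∫⁻ t, m j x ^ (p-1) * F t x ∂ν := fun x =>
          (lintegral_const_mul' _ _
            (ENNReal.rpow_ne_top_of_nonneg (by linarith) (hmtop j x))).symm
        simp_rw [e1]
        exact lintegral_lintegral_swap
          ((((hmmeas j).comp measurable_fst).pow_const _).mul
            (hF.comp measurable_swap)).aemeasurable
      have h3 : ∀ t, ∫⁻ x in S j, m j x ^ (p-1) * F t x ∂μ
          ≤ B j ^ (1/q) * (∫⁻ x, F t x ^ p ∂μ) ^ (1/p) := by
        intro t
        have hFt : Measurable (F t) := hF.comp measurable_prodMk_left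
        have hold := ENNReal.lintegral_mul_le_Lp_mul_Lq (μ.restrict (S j)) hpq.symm
          (f := fun x => m j x ^ (p-1)) (g := F t)
          (((hmmeas j).pow_const (p-1)).aemeasurable) hFt.aemeasurable
        refine le_trans (le_of_eq (lintegral_congr fun x => rfl)) (hold.trans ?_)
        gcongr
        · refine le_of_eq ?_
          congr 1
          funext x
          rw [← ENNReal.rpow_mul, hpq.sub_one_mul_conj]
        · exact Measure.restrict_le_self
      calc B j ≤ ∫⁻ x in S j, m j x ^ (p-1) * I x ∂μ := h1
        _ = _ := h2
        _ ≤ ∫⁻ t, B j ^ (1/q) * (∫⁻ x, F t x ^ p ∂μ) ^ (1/p) ∂ν := lintegral_mono h3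
        _ = B j ^ (1/q) * C := lintegral_const_mul' _ _
            (ENNReal.rpow_ne_top_of_nonneg (by positivity) (hBtop j))
        _ = C * B j ^ (1/q) := mul_comm _ _
    rcases eq_or_ne (B j) 0 with h0 | h0
    · rw [h0, ENNReal.zero_rpow_of_pos (by positivity)]; exact zero_le
    · have hqt : B j ^ (1/q) ≠ ⊤ :=
        ENNReal.rpow_ne_top_of_nonneg (by positivity) (hBtop j)
      have hq0' : B j ^ (1/q) ≠ 0 := by
        simp [ENNReal.rpow_eq_zero_iff, h0, hBtop j, hq0, not_lt.2 hq0.le]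
      rw [← ENNReal.mul_le_mul_iff_left hq0' hqt]
      calc B j ^ (1/p) * B j ^ (1/q) = B j := by
            rw [← ENNReal.rpow_add _ _ h0 (hBtop j), one_div, one_div,
              hpq.inv_add_inv_eq_one, ENNReal.rpow_one]
        _ ≤ C * B j ^ (1/q) := hBle
  have hmono : Monotone fun j : ℕ => (S j).indicator fun x => m j x ^ p := by
    intro a b hab x
    by_cases hx : x ∈ S a
    · simp only [Set.indicator_of_mem hx, Set.indicator_of_mem (show x ∈ S b from monotone_spanningSets μ hab hx)]
      exact ENNReal.rpow_le_rpow (min_le_min le_rfl (Nat.cast_le.2 hab)) hp0.le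
    · simp only [Set.indicator_of_notMem hx]; exact zero_le
  have hpt : ∀ x, (⨆ j : ℕ, (S j).indicator (fun x => m j x ^ p) x) = I x ^ p := by
    intro x
    have hxmem : x ∈ ⋃ i, S i := by rw [hSdef, iUnion_spanningSets]; trivial
    obtain ⟨k, hk⟩ := mem_iUnion.1 hxmem
    refine le_antisymm (iSup_le fun j => ?_) ?_
    · refine (Set.indicator_le_self _ _ x).trans ?_
      exact ENNReal.rpow_le_rpow (min_le_left _ _) hp0.le
    · have e : I x ^ p ≤ ⨆ j : ℕ, m j x ^ p := by
        rcases eq_or_ne (I x) ⊤ with htop | hne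
        · rw [htop, ENNReal.top_rpow_of_pos hp0]
          rw [top_le_iff, iSup_eq_top]
          intro b hb
          obtain ⟨c, hc⟩ := ENNReal.exists_nat_gt hb.ne
          refine ⟨c, lt_of_lt_of_le hc ?_⟩
          have hc1 : (1:ℝ≥0∞) ≤ (c:ℝ≥0∞) := by
            rcases Nat.eq_zero_or_pos c with rfl | hcpos
            · exfalso; simp at hc
            · exact_mod_cast hcpos
          calc (c:ℝ≥0∞) = min (I x) c := by rw [htop, min_eq_right le_top]
            _ = min (I x) c ^ (1:ℝ) := (ENNReal.rpow_one _).symm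
            _ ≤ m c x ^ p := by
                rw [hmdef]
                exact ENNReal.rpow_le_rpow_of_exponent_le
                  (by rw [htop, min_eq_right le_top]; exact hc1) hp
        · obtain ⟨c, hc⟩ := ENNReal.exists_nat_gt hne
          refine le_iSup_of_le c (le_of_eq ?_)
          rw [hmdef]; simp only []
          rw [min_eq_left hc.le]
      refine e.trans (iSup_le fun j => ?_)
      refine le_iSup_of_le (max j k) ?_
      simp only [Set.indicator_of_mem (show x ∈ S (max j k) from monotone_spanningSets μ (le_max_right j k) hk)]
      exact ENNReal.rpow_le_rpow
        (min_le_min le_rfl (Nat.cast_le.2 (le_max_left j k))) hp0.le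
  have hsup : ∫⁻ x, I x ^ p ∂μ = ⨆ j, B j := by
    calc ∫⁻ x, I x ^ p ∂μ
        = ∫⁻ x, ⨆ j : ℕ, (S j).indicator (fun x => m j x ^ p) x ∂μ :=
          lintegral_congr fun x => (hpt x).symm
      _ = ⨆ j, ∫⁻ x, (S j).indicator (fun x => m j x ^ p) x ∂μ :=
          lintegral_iSup (fun j => (((hmmeas j).pow_const p).indicator
            (measurableSet_spanningSets μ j))) hmono
      _ = ⨆ j, B j := by
          refine iSup_congr fun j => ?_
          rw [lintegral_indicator (measurableSet_spanningSets μ j)]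
  have hfinal : ∫⁻ x, I x ^ p ∂μ ≤ C ^ p := by
    rw [hsup]
    refine iSup_le fun j => ?_
    calc B j = (B j ^ (1/p)) ^ p := by
          rw [← ENNReal.rpow_mul, one_div, inv_mul_cancel₀ hp0.ne', ENNReal.rpow_one]
      _ ≤ C ^ p := ENNReal.rpow_le_rpow (hkey j) hp0.le
  calc (∫⁻ x, I x ^ p ∂μ) ^ (1/p) ≤ (C^p) ^ (1/p) :=
        ENNReal.rpow_le_rpow hfinal (by positivity)
    _ = C := by rw [← ENNReal.rpow_mul, mul_one_div_cancel hp0.ne', ENNReal.rpow_one]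

/-- Scaling identity for weighted lintegrals. -/
theorem scale_lintegral {n : ℕ} {α : ℝ} {ω : EuclideanSpace ℝ (Fin n) → ℝ}
    (hω : IsWeight n α ω) {c : ℝ} (hc : c ≠ 0)
    {φ : EuclideanSpace ℝ (Fin n) → ℝ≥0∞} (hφ : Measurable φ) :
    ∫⁻ x, φ (c • x) * ENNReal.ofReal (ω x) =
      ENNReal.ofReal (|c| ^ (-((n:ℝ) + α))) * ∫⁻ y, φ y * ENNReal.ofReal (ω y) := by
  have hc0 : (0:ℝ) < |c| := abs_pos.2 hc
  have hh : Measurable fun y => φ y * ENNReal.ofReal (ω y) :=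
    hφ.mul (ENNReal.measurable_ofReal.comp hω.measurable)
  have e1 : ∀ x, ENNReal.ofReal (ω x)
      = ENNReal.ofReal (|c| ^ (-α)) * ENNReal.ofReal (ω (c • x)) := by
    intro x
    rw [hω.homog c hc x, ← ENNReal.ofReal_mul (by positivity)]
    congr 1
    rw [← mul_assoc, ← Real.rpow_add hc0, neg_add_cancel, Real.rpow_zero, one_mul]
  have hmap : ∫⁻ x, (fun y => φ y * ENNReal.ofReal (ω y)) (c • x)
      = ENNReal.ofReal |(c ^ n)⁻¹| * ∫⁻ y, φ y * ENNReal.ofReal (ω y) := by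
    rw [← lintegral_map hh (measurable_const_smul c),
      Measure.map_addHaar_smul volume hc, lintegral_smul_measure,
      finrank_euclideanSpace_fin, smul_eq_mul]
  calc ∫⁻ x, φ (c • x) * ENNReal.ofReal (ω x)
      = ∫⁻ x, ENNReal.ofReal (|c| ^ (-α)) *
          ((fun y => φ y * ENNReal.ofReal (ω y)) (c • x)) := by
        refine lintegral_congr fun x => ?_
        rw [e1 x]; ring
    _ = ENNReal.ofReal (|c| ^ (-α)) *
          ∫⁻ x, (fun y => φ y * ENNReal.ofReal (ω y)) (c • x) :=
        lintegral_const_mul' _ _ ENNReal.ofReal_ne_top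
    _ = ENNReal.ofReal (|c| ^ (-α)) *
          (ENNReal.ofReal |(c ^ n)⁻¹| * ∫⁻ y, φ y * ENNReal.ofReal (ω y)) := by rw [hmap]
    _ = ENNReal.ofReal (|c| ^ (-((n:ℝ) + α))) * ∫⁻ y, φ y * ENNReal.ofReal (ω y) := by
        rw [← mul_assoc, ← ENNReal.ofReal_mul (by positivity)]
        congr 2
        rw [abs_inv, abs_pow, ← Real.rpow_natCast |c| n, ← Real.rpow_neg hc0.le,
          ← Real.rpow_add hc0]
        congr 1; ring

end HCAux

open Function
open scoped ENNReal

/-- If `A = ∫₀¹ |s(t)|^{-(n+α)/p} ψ(t) dt < ∞`, then `U_{ψ,s}` is bounded on `L^p(ω)`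
with `‖U_{ψ,s}f‖_{L^p(ω)} ≤ A ‖f‖_{L^p(ω)}`. -/
theorem hardyCesaro_wnorm_le {n : ℕ} (hn : 1 ≤ n) {α p β : ℝ} (hp : 1 ≤ p)
    {ω : EuclideanSpace ℝ (Fin n) → ℝ} (hω : IsWeight n α ω)
    {ψ s : ℝ → ℝ} (hψm : Measurable ψ) (hψ : ∀ t ∈ Icc (0 : ℝ) 1, 0 ≤ ψ t)
    (hsm : Measurable s) (hβ : 0 < β)
    (hs : ∀ᵐ t ∂(volume.restrict (Icc (0 : ℝ) 1)), t ^ β ≤ |s t|)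
    (hA : IntegrableOn (fun t => |s t| ^ (-((n : ℝ) + α) / p) * ψ t) (Icc (0 : ℝ) 1))
    (f : EuclideanSpace ℝ (Fin n) → ℝ) (hf : MemWLp ω p f) :
    wNorm ω p (hardyCesaro ψ s f) ≤
      (∫ t in Icc (0 : ℝ) 1, |s t| ^ (-((n : ℝ) + α) / p) * ψ t) * wNorm ω p f := by
  classical
  have hp0 : (0:ℝ) < p := lt_of_lt_of_le zero_lt_one hp
  set ν := (volume : Measure ℝ).restrict (Icc (0:ℝ) 1) with hν
  obtain ⟨hfae, hfint⟩ := hf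
  obtain ⟨g, hgm, hfg⟩ := hfae
  set A := ∫ t in Icc (0 : ℝ) 1, |s t| ^ (-((n : ℝ) + α) / p) * ψ t with hAdef
  have hAnn : ∀ᵐ t ∂ν, 0 ≤ |s t| ^ (-((n : ℝ) + α) / p) * ψ t := by
    filter_upwards [ae_restrict_mem measurableSet_Icc] with t ht
    exact mul_nonneg (Real.rpow_nonneg (abs_nonneg _) _) (hψ t ht)
  have hA0 : 0 ≤ A := integral_nonneg_of_ae hAnn
  -- a.e. `s t ≠ 0`
  have hsne : ∀ᵐ t ∂ν, s t ≠ 0 := by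
    have h1 : ∀ᵐ t ∂ν, t ∈ Icc (0:ℝ) 1 := ae_restrict_mem measurableSet_Icc
    have h2 : ∀ᵐ t ∂ν, t ≠ 0 := by
      refine ae_iff.2 ?_
      have he : {t : ℝ | ¬ t ≠ 0} = {0} := by ext t; simp
      rw [he, hν, Measure.restrict_apply (measurableSet_singleton 0)]
      exact measure_mono_null inter_subset_left (measure_singleton 0)
    filter_upwards [hs, h1, h2] with t h1t h2t h3t
    intro h0
    have hpos : (0:ℝ) < t ^ β :=
      Real.rpow_pos_of_pos (lt_of_le_of_ne h2t.1 (Ne.symm h3t)) β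
    rw [h0, abs_zero] at h1t
    linarith
  -- congruence of the operator under a.e. modification
  have hUcong : hardyCesaro ψ s f =ᵐ[volume] hardyCesaro ψ s g := by
    set N := toMeasurable (volume : Measure (EuclideanSpace ℝ (Fin n))) {y | f y ≠ g y} with hN
    have hNmeas : MeasurableSet N := measurableSet_toMeasurable _ _
    have hNnull : volume N = 0 := by
      rw [hN, measure_toMeasurable]
      exact hfg
    set P := {q : ℝ × (EuclideanSpace ℝ (Fin n)) | s q.1 • q.2 ∈ N} with hPdef
    have hP : MeasurableSet P := by
      have hsmul : Measurable fun q : ℝ × EuclideanSpace ℝ (Fin n) => s q.1 • q.2 :=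
        (hsm.comp measurable_fst).smul measurable_snd
      exact hsmul hNmeas
    have hnull : (ν.prod volume) P = 0 := by
      rw [Measure.measure_prod_null hP]
      filter_upwards [hsne] with t hst
      have he : (Prod.mk t ⁻¹' P) = (s t • ·) ⁻¹' N := rfl
      rw [he, Measure.addHaar_preimage_smul volume hst, hNnull, mul_zero]
      rfl
    have hnull' : ((volume : Measure (EuclideanSpace ℝ (Fin n))).prod ν)
        (Prod.swap ⁻¹' P) = 0 := by
      calc ((volume : Measure (EuclideanSpace ℝ (Fin n))).prod ν) (Prod.swap ⁻¹' P)
          = (Measure.map Prod.swap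
              ((volume : Measure (EuclideanSpace ℝ (Fin n))).prod ν)) P :=
            (Measure.map_apply measurable_swap hP).symm
        _ = (ν.prod volume) P := by rw [Measure.prod_swap]
        _ = 0 := hnull
    have hae := (Measure.measure_prod_null (hP.preimage measurable_swap)).1 hnull'
    filter_upwards [hae] with x hx
    refine integral_congr_ae ?_
    have hxe : ∀ᵐ t ∂ν, s t • x ∉ N := by
      have := measure_eq_zero_iff_ae_notMem.1 hx
      filter_upwards [this] with t ht
      exact fun hmem => ht hmem
    filter_upwards [hxe] with t ht
    have heq : f (s t • x) = g (s t • x) := by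
      by_contra hne
      exact ht (subset_toMeasurable _ _ hne)
    rw [heq]
  have wNorm_congr : ∀ h₁ h₂ : EuclideanSpace ℝ (Fin n) → ℝ, h₁ =ᵐ[volume] h₂ →
      wNorm ω p h₁ = wNorm ω p h₂ := by
    intro h₁ h₂ hh
    unfold wNorm
    congr 1
    refine integral_congr_ae ?_
    filter_upwards [hh] with x hx
    rw [hx]
  -- measurability of the operator applied to `g`
  have hUgm : Measurable (hardyCesaro ψ s g) := by
    have hj : Measurable fun q : (EuclideanSpace ℝ (Fin n)) × ℝ => g (s q.2 • q.1) * ψ q.2 :=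
      (hgm.comp ((hsm.comp measurable_snd).smul measurable_fst)).mul (hψm.comp measurable_snd)
    exact (hj.stronglyMeasurable.integral_prod_right').measurable
  -- the weighted p-energy
  set L : (EuclideanSpace ℝ (Fin n) → ℝ) → ℝ≥0∞ :=
    fun h => ∫⁻ x, (ENNReal.ofReal |h x|) ^ p * ENNReal.ofReal (ω x) with hLdef
  have key_eq : ∀ h : EuclideanSpace ℝ (Fin n) → ℝ, Measurable h →
      wNorm ω p h = (L h).toReal ^ (1/p) := by
    intro h hh
    unfold wNorm
    congr 1
    rw [integral_eq_lintegral_of_nonneg_ae ?_ ?_]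
    · congr 1
      refine lintegral_congr_ae ?_
      filter_upwards [hω.pos] with x hx
      rw [ENNReal.ofReal_mul (Real.rpow_nonneg (abs_nonneg _) _),
        ← ENNReal.ofReal_rpow_of_nonneg (abs_nonneg _) hp0.le]
    · filter_upwards [hω.pos] with x hx
      exact mul_nonneg (Real.rpow_nonneg (abs_nonneg _) _) hx.le
    · exact ((hh.abs.pow_const p).mul hω.measurable).aestronglyMeasurable
  have L_congr : L f = L g := by
    refine lintegral_congr_ae ?_
    filter_upwards [hfg] with x hx
    rw [hx]
  have hLg_fin : L g ≠ ⊤ := by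
    rw [← L_congr]
    have hle : L f ≤ ∫⁻ x, ‖|f x| ^ p * ω x‖₊ ∂volume := by
      refine lintegral_mono_ae ?_
      filter_upwards [hω.pos] with x hx
      calc (ENNReal.ofReal |f x|) ^ p * ENNReal.ofReal (ω x)
          = ENNReal.ofReal (|f x| ^ p * ω x) := by
            rw [ENNReal.ofReal_mul (Real.rpow_nonneg (abs_nonneg _) _),
              ← ENNReal.ofReal_rpow_of_nonneg (abs_nonneg _) hp0.le]
        _ ≤ ‖|f x| ^ p * ω x‖₊ := Real.ofReal_le_enorm _
    exact ne_top_of_le_ne_top hfint.2.ne hle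
  -- the kernel
  set F : ℝ → EuclideanSpace ℝ (Fin n) → ℝ≥0∞ :=
    fun t x => ENNReal.ofReal |g (s t • x)| * ENNReal.ofReal (ψ t) with hFdef
  have hFm : Measurable (Function.uncurry F) :=
    (ENNReal.measurable_ofReal.comp
      (hgm.abs.comp ((hsm.comp measurable_fst).smul measurable_snd))).mul
      (ENNReal.measurable_ofReal.comp (hψm.comp measurable_fst))
  set μw := (volume : Measure (EuclideanSpace ℝ (Fin n))).withDensity
    (fun x => ENNReal.ofReal (ω x)) with hμw
  have hωm' : Measurable fun x => ENNReal.ofReal (ω x) :=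
    ENNReal.measurable_ofReal.comp hω.measurable
  have hdens : ∀ (φ : EuclideanSpace ℝ (Fin n) → ℝ≥0∞), Measurable φ →
      ∫⁻ x, φ x ∂μw = ∫⁻ x, φ x * ENNReal.ofReal (ω x) := by
    intro φ hφ
    rw [hμw, lintegral_withDensity_eq_lintegral_mul volume hωm' hφ]
    exact lintegral_congr fun x => mul_comm _ _
  have hIm : Measurable fun x => ∫⁻ t, F t x ∂ν :=
    (hFm.comp measurable_swap).lintegral_prod_right'
  -- Step a : pointwise domination
  have stepa : L (hardyCesaro ψ s g) ≤ ∫⁻ x, (∫⁻ t, F t x ∂ν) ^ p ∂μw := by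
    rw [hdens _ (hIm.pow_const p)]
    refine lintegral_mono fun x => ?_
    have h1 : ENNReal.ofReal |hardyCesaro ψ s g x| ≤ ∫⁻ t, F t x ∂ν := by
      have h2 := norm_integral_le_lintegral_norm (μ := ν) (fun t => g (s t • x) * ψ t)
      have h3 : (∫⁻ t, ENNReal.ofReal ‖g (s t • x) * ψ t‖ ∂ν) = ∫⁻ t, F t x ∂ν := by
        refine lintegral_congr_ae ?_
        filter_upwards [ae_restrict_mem measurableSet_Icc] with t ht
        rw [norm_mul, Real.norm_eq_abs, Real.norm_eq_abs,
          ENNReal.ofReal_mul (abs_nonneg _), abs_of_nonneg (hψ t ht)]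
      calc ENNReal.ofReal |hardyCesaro ψ s g x|
          ≤ ENNReal.ofReal ((∫⁻ t, ENNReal.ofReal ‖g (s t • x) * ψ t‖ ∂ν).toReal) := by
            refine ENNReal.ofReal_le_ofReal ?_
            rw [← Real.norm_eq_abs]
            exact h2
        _ ≤ ∫⁻ t, ENNReal.ofReal ‖g (s t • x) * ψ t‖ ∂ν := ENNReal.ofReal_toReal_le
        _ = _ := h3
    exact mul_le_mul_left (ENNReal.rpow_le_rpow h1 hp0.le) _
  -- Minkowski's integral inequality
  have mink := HCAux.minkowski_lintegral μw ν hp hFm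
  -- Step c : computation of the inner norm by scaling
  have stepc : ∀ᵐ t ∂ν, (∫⁻ x, F t x ^ p ∂μw) ^ (1/p)
      = ENNReal.ofReal (|s t| ^ (-((n:ℝ)+α)/p) * ψ t) * (L g) ^ (1/p) := by
    filter_upwards [hsne, ae_restrict_mem measurableSet_Icc] with t hst htmem
    have hstpos : (0:ℝ) < |s t| := abs_pos.2 hst
    have hφm : Measurable fun y : EuclideanSpace ℝ (Fin n) => (ENNReal.ofReal |g y|) ^ p :=
      (ENNReal.measurable_ofReal.comp hgm.abs).pow_const p
    have e1 : ∫⁻ x, F t x ^ p ∂μw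
        = ENNReal.ofReal (ψ t) ^ p * (ENNReal.ofReal (|s t| ^ (-((n:ℝ)+α))) * L g) := by
      have e2 : ∀ x, F t x ^ p
          = ENNReal.ofReal (ψ t) ^ p *
            (fun y => (ENNReal.ofReal |g y|) ^ p) (s t • x) := by
        intro x
        rw [hFdef]
        simp only []
        rw [ENNReal.mul_rpow_of_nonneg _ _ hp0.le]
        ring
      calc ∫⁻ x, F t x ^ p ∂μw
          = ∫⁻ x, ENNReal.ofReal (ψ t) ^ p *
              (fun y => (ENNReal.ofReal |g y|) ^ p) (s t • x) ∂μw := lintegral_congr e2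
        _ = ENNReal.ofReal (ψ t) ^ p *
              ∫⁻ x, (fun y => (ENNReal.ofReal |g y|) ^ p) (s t • x) ∂μw :=
            lintegral_const_mul' _ _
              (ENNReal.rpow_ne_top_of_nonneg hp0.le ENNReal.ofReal_ne_top)
        _ = ENNReal.ofReal (ψ t) ^ p *
              (ENNReal.ofReal (|s t| ^ (-((n:ℝ)+α))) * L g) := by
            congr 1
            exact (hdens _ (hφm.comp (measurable_const_smul (s t)))).trans
              (HCAux.scale_lintegral hω hst hφm)
    rw [e1, ENNReal.mul_rpow_of_nonneg _ _ (by positivity),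
      ENNReal.mul_rpow_of_nonneg _ _ (by positivity),
      ← ENNReal.rpow_mul, mul_one_div_cancel hp0.ne', ENNReal.rpow_one,
      ENNReal.ofReal_rpow_of_pos (Real.rpow_pos_of_pos hstpos _),
      ← Real.rpow_mul (abs_nonneg _), mul_one_div,
      ENNReal.ofReal_mul (Real.rpow_nonneg (abs_nonneg _) _)]
    ring
  -- Step d : integrate in t
  have stepd : ∫⁻ t, (∫⁻ x, F t x ^ p ∂μw) ^ (1/p) ∂ν
      = ENNReal.ofReal A * (L g)^(1/p) := by
    rw [lintegral_congr_ae stepc,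
      lintegral_mul_const' _ _ (ENNReal.rpow_ne_top_of_nonneg (by positivity) hLg_fin)]
    congr 1
    rw [hAdef, ofReal_integral_eq_lintegral_ofReal hA hAnn]
  -- assemble
  have main : (L (hardyCesaro ψ s g)) ^ (1/p) ≤ ENNReal.ofReal A * (L g)^(1/p) :=
    calc (L (hardyCesaro ψ s g)) ^ (1/p)
        ≤ (∫⁻ x, (∫⁻ t, F t x ∂ν) ^ p ∂μw) ^ (1/p) :=
          ENNReal.rpow_le_rpow stepa (by positivity)
      _ ≤ ∫⁻ t, (∫⁻ x, F t x ^ p ∂μw) ^ (1/p) ∂ν := mink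
      _ = ENNReal.ofReal A * (L g)^(1/p) := stepd
  have hrhs_fin : ENNReal.ofReal A * (L g)^(1/p) ≠ ⊤ :=
    ENNReal.mul_ne_top ENNReal.ofReal_ne_top
      (ENNReal.rpow_ne_top_of_nonneg (by positivity) hLg_fin)
  rw [wNorm_congr _ _ hUcong, wNorm_congr _ _ hfg, key_eq _ hUgm, key_eq _ hgm]
  rw [ENNReal.toReal_rpow, ENNReal.toReal_rpow]
  calc ((L (hardyCesaro ψ s g)) ^ (1/p)).toReal
      ≤ (ENNReal.ofReal A * (L g)^(1/p)).toReal := ENNReal.toReal_mono hrhs_fin main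
    _ = A * ((L g)^(1/p)).toReal := by
        rw [ENNReal.toReal_mul, ENNReal.toReal_ofReal hA0]
end
end

section
/- For 1 < p < ∞ and b < p, for any nonnegative measurable f on (0,∞): (∫₀^∞ (∫₀^x f(t) dt)^p x^{-b-1} dx)^{1/p} ≤ (p/b) (∫₀^∞ f(t)^p t^{p-b-1} dt)^{1/p}, provided b > 0. -/
open MeasureTheory Set
open scoped ENNReal

lemma hardy_swap (H K : ℝ → ℝ≥0∞) (hH : Measurable H) (hK : Measurable K) :
    ∫⁻ x in Ioi (0:ℝ), (∫⁻ t in Ioc (0:ℝ) x, H t) * K x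
      = ∫⁻ t in Ioi (0:ℝ), H t * ∫⁻ x in Ioi t, K x := by
  have hS : MeasurableSet {z : ℝ × ℝ | 0 < z.2 ∧ z.2 ≤ z.1} :=
    (measurableSet_lt measurable_const measurable_snd).inter
      (measurableSet_le measurable_snd measurable_fst)
  set Φ : ℝ → ℝ → ℝ≥0∞ := fun x t => ({s : ℝ | 0 < s ∧ s ≤ x}).indicator (fun s => H s * K x) t
    with hΦ
  have hmeas : AEMeasurable (Function.uncurry Φ)
      ((volume.restrict (Ioi (0:ℝ))).prod (volume.restrict (Ioi (0:ℝ)))) := by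
    have : Function.uncurry Φ
        = ({z : ℝ × ℝ | 0 < z.2 ∧ z.2 ≤ z.1}).indicator (fun z => H z.2 * K z.1) := by
      ext z
      simp only [Function.uncurry, hΦ, Set.indicator_apply, Set.mem_setOf_eq]
    rw [this]
    exact (((hH.comp measurable_snd).mul (hK.comp measurable_fst)).indicator hS).aemeasurable
  have h1 : ∀ x : ℝ, ∫⁻ t in Ioi (0:ℝ), Φ x t = (∫⁻ t in Ioc (0:ℝ) x, H t) * K x := by
    intro x
    have hset : MeasurableSet {s : ℝ | 0 < s ∧ s ≤ x} :=
      (measurableSet_lt measurable_const measurable_id).inter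
        (measurableSet_le measurable_id measurable_const)
    show ∫⁻ t in Ioi (0:ℝ), ({s : ℝ | 0 < s ∧ s ≤ x}).indicator (fun s => H s * K x) t = _
    rw [lintegral_indicator hset, Measure.restrict_restrict hset]
    have hseteq : {s : ℝ | 0 < s ∧ s ≤ x} ∩ Ioi 0 = Ioc 0 x := by
      ext s; simp only [mem_inter_iff, mem_setOf_eq, mem_Ioc, mem_Ioi]; tauto
    rw [hseteq, lintegral_mul_const _ hH]
  have h2 : ∀ t ∈ Ioi (0:ℝ), ∫⁻ x in Ioi (0:ℝ), Φ x t = H t * ∫⁻ x in Ioi t, K x := by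
    intro t ht
    have hpt : ∀ x : ℝ, Φ x t = (Ici t).indicator (fun x => H t * K x) x := by
      intro x
      simp only [hΦ, Set.indicator_apply, Set.mem_setOf_eq, mem_Ici]
      have ht' := mem_Ioi.mp ht
      by_cases hx : t ≤ x <;> simp [hx, ht']
    simp only [hpt]
    rw [lintegral_indicator measurableSet_Ici, Measure.restrict_restrict measurableSet_Ici]
    have : Ici t ∩ Ioi (0:ℝ) = Ici t := inter_eq_left.mpr (fun x hx => show (0:ℝ) < x from lt_of_lt_of_le ht hx)
    rw [this, lintegral_const_mul _ hK,
      Measure.restrict_congr_set (Filter.EventuallyEq.symm Ioi_ae_eq_Ici)]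
  calc ∫⁻ x in Ioi (0:ℝ), (∫⁻ t in Ioc (0:ℝ) x, H t) * K x
      = ∫⁻ x in Ioi (0:ℝ), ∫⁻ t in Ioi (0:ℝ), Φ x t :=
        lintegral_congr fun x => (h1 x).symm
    _ = ∫⁻ t in Ioi (0:ℝ), ∫⁻ x in Ioi (0:ℝ), Φ x t := lintegral_lintegral_swap hmeas
    _ = ∫⁻ t in Ioi (0:ℝ), H t * ∫⁻ x in Ioi t, K x :=
        setLIntegral_congr_fun measurableSet_Ioi (fun t ht => h2 t ht)

lemma hardy_lint_Ioc {a x : ℝ} (ha : 0 < a) (hx : 0 < x) :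
    ∫⁻ t in Ioc (0:ℝ) x, ENNReal.ofReal (t ^ (a - 1)) = ENNReal.ofReal (x ^ a / a) := by
  rw [← ofReal_integral_eq_lintegral_ofReal]
  · congr 1
    rw [← intervalIntegral.integral_of_le hx.le,
      integral_rpow (Or.inl (by linarith : (-1:ℝ) < a - 1))]
    have h1 : a - 1 + 1 = a := by ring
    rw [h1, Real.zero_rpow ha.ne', sub_zero]
  · exact (intervalIntegrable_iff_integrableOn_Ioc_of_le hx.le).mp
      (intervalIntegral.intervalIntegrable_rpow' (by linarith))
  · filter_upwards [ae_restrict_mem measurableSet_Ioc] with t ht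
    exact (Real.rpow_pos_of_pos ht.1 _).le

lemma hardy_lint_Ioi {a t : ℝ} (ha : 0 < a) (ht : 0 < t) :
    ∫⁻ x in Ioi t, ENNReal.ofReal (x ^ (-a - 1)) = ENNReal.ofReal (t ^ (-a) / a) := by
  rw [← ofReal_integral_eq_lintegral_ofReal]
  · congr 1
    rw [integral_Ioi_rpow_of_lt (by linarith : -a - 1 < -1) ht]
    have h1 : -a - 1 + 1 = -a := by ring
    rw [h1]
    field_simp
  · exact integrableOn_Ioi_rpow_of_lt (by linarith) ht
  · filter_upwards [ae_restrict_mem measurableSet_Ioi] with x hx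
    exact (Real.rpow_pos_of_pos (ht.trans hx) _).le

lemma hardy_holder {p q a β : ℝ} (hpq : Real.HolderConjugate p q) (ha : 0 < a)
    (hβq : β * q = 1 - a) (g : ℝ → ℝ≥0∞) (hg : Measurable g) {x : ℝ} (hx : 0 < x) :
    (∫⁻ t in Ioc (0:ℝ) x, g t)
      ≤ (∫⁻ t in Ioc (0:ℝ) x, g t ^ p * ENNReal.ofReal (t ^ (β * p))) ^ (1/p)
        * ENNReal.ofReal (x ^ a / a) ^ (1/q) := by
  set F : ℝ → ℝ≥0∞ := fun t => g t * ENNReal.ofReal (t ^ β) with hF_def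
  set G : ℝ → ℝ≥0∞ := fun t => ENNReal.ofReal (t ^ (-β)) with hG_def
  have hF : Measurable F := by
    apply hg.mul; measurability
  have hG : Measurable G := by measurability
  have key := ENNReal.lintegral_mul_le_Lp_mul_Lq (volume.restrict (Ioc (0:ℝ) x)) hpq
    hF.aemeasurable hG.aemeasurable
  have h1 : ∫⁻ t in Ioc (0:ℝ) x, (F * G) t = ∫⁻ t in Ioc (0:ℝ) x, g t := by
    refine setLIntegral_congr_fun measurableSet_Ioc
      (fun t ht => ?_)
    show g t * ENNReal.ofReal (t ^ β) * ENNReal.ofReal (t ^ (-β)) = g t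
    rw [mul_assoc, ← ENNReal.ofReal_mul (Real.rpow_nonneg ht.1.le _),
      ← Real.rpow_add ht.1]
    simp
  have h2 : ∫⁻ t in Ioc (0:ℝ) x, F t ^ p
      = ∫⁻ t in Ioc (0:ℝ) x, g t ^ p * ENNReal.ofReal (t ^ (β * p)) := by
    refine setLIntegral_congr_fun measurableSet_Ioc
      (fun t ht => ?_)
    show (g t * ENNReal.ofReal (t ^ β)) ^ p = _
    rw [ENNReal.mul_rpow_of_nonneg _ _ hpq.nonneg,
      ENNReal.ofReal_rpow_of_pos (Real.rpow_pos_of_pos ht.1 β),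
      ← Real.rpow_mul ht.1.le]
  have h3 : ∫⁻ t in Ioc (0:ℝ) x, G t ^ q = ENNReal.ofReal (x ^ a / a) := by
    have h3' : ∫⁻ t in Ioc (0:ℝ) x, G t ^ q
        = ∫⁻ t in Ioc (0:ℝ) x, ENNReal.ofReal (t ^ (a - 1)) := by
      refine setLIntegral_congr_fun measurableSet_Ioc
        (fun t ht => ?_)
      show (ENNReal.ofReal (t ^ (-β))) ^ q = _
      rw [ENNReal.ofReal_rpow_of_pos (Real.rpow_pos_of_pos ht.1 _),
        ← Real.rpow_mul ht.1.le]
      congr 2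
      rw [neg_mul, hβq]; ring
    rw [h3', hardy_lint_Ioc ha hx]
  rw [h1, h2, h3] at key
  exact key

/-- The weighted Hardy integral inequality: for `1 < p < ∞`, `0 < b < p`, and any
nonnegative measurable `f` on `(0,∞)`,
`(∫₀^∞ (∫₀ˣ f)^p x^{-b-1} dx)^{1/p} ≤ (p/b) (∫₀^∞ f(t)^p t^{p-b-1} dt)^{1/p}`. -/
theorem weighted_hardy_inequality {p b : ℝ} (hp : 1 < p) (hb : 0 < b) (hbp : b < p)
    (f : ℝ → ℝ) (hf : Measurable f) (hf0 : ∀ t ∈ Ioi (0 : ℝ), 0 ≤ f t) :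
    (∫⁻ x in Ioi (0 : ℝ),
        (∫⁻ t in Ioc (0 : ℝ) x, ENNReal.ofReal (f t)) ^ p * ENNReal.ofReal (x ^ (-b - 1)))
        ^ (1 / p) ≤
      ENNReal.ofReal (p / b) *
        (∫⁻ t in Ioi (0 : ℝ),
          ENNReal.ofReal (f t) ^ p * ENNReal.ofReal (t ^ (p - b - 1))) ^ (1 / p) := by
  have hp0 : 0 < p := lt_trans one_pos hp
  have hp1 : 0 < p - 1 := by linarith
  set q : ℝ := p / (p - 1) with hq_def
  have hq0 : 0 < q := div_pos hp0 hp1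
  have hpq : Real.HolderConjugate p q := Real.HolderConjugate.conjExponent hp
  set a : ℝ := b / p with ha_def
  have ha : 0 < a := div_pos hb hp0
  have hap : a * p = b := by rw [ha_def]; field_simp
  have hpdivq : p / q = p - 1 := by rw [hq_def]; field_simp
  set β : ℝ := (1 - a) / q with hβ_def
  have hβq : β * q = 1 - a := by rw [hβ_def]; field_simp
  have hβp : β * p = (1 - a) * (p - 1) := by
    rw [hβ_def, div_mul_eq_mul_div, mul_div_assoc, hpdivq]
  set g : ℝ → ℝ≥0∞ := fun t => ENNReal.ofReal (f t) with hg_def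
  have hg : Measurable g := hf.ennreal_ofReal
  set H : ℝ → ℝ≥0∞ := fun t => g t ^ p * ENNReal.ofReal (t ^ (β * p)) with hH_def
  have hH : Measurable H := by
    apply Measurable.mul
    · exact (ENNReal.continuous_rpow_const.measurable).comp hg
    · measurability
  set V : ℝ → ℝ≥0∞ := fun x => ENNReal.ofReal (x ^ (-a - 1)) with hV_def
  have hV : Measurable V := by measurability
  set R : ℝ≥0∞ := ∫⁻ t in Ioi (0:ℝ), g t ^ p * ENNReal.ofReal (t ^ (p - b - 1)) with hR_def
  set L : ℝ≥0∞ := ∫⁻ x in Ioi (0:ℝ),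
      (∫⁻ t in Ioc (0:ℝ) x, g t) ^ p * ENNReal.ofReal (x ^ (-b - 1)) with hL_def
  have key : ∀ x ∈ Ioi (0:ℝ),
      (∫⁻ t in Ioc (0:ℝ) x, g t) ^ p * ENNReal.ofReal (x ^ (-b - 1))
        ≤ ENNReal.ofReal (a ^ (1 - p)) * ((∫⁻ t in Ioc (0:ℝ) x, H t) * V x) := by
    intro x hx
    have hx0 : (0:ℝ) < x := hx
    have h := hardy_holder hpq ha hβq g hg hx0
    have h2 := ENNReal.rpow_le_rpow h hp0.le
    have hrw : ((∫⁻ t in Ioc (0:ℝ) x, H t) ^ (1/p) * ENNReal.ofReal (x ^ a / a) ^ (1/q)) ^ p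
        = (∫⁻ t in Ioc (0:ℝ) x, H t) * ENNReal.ofReal ((x ^ a / a) ^ (p - 1)) := by
      rw [ENNReal.mul_rpow_of_nonneg _ _ hp0.le, ← ENNReal.rpow_mul, ← ENNReal.rpow_mul,
        one_div_mul_cancel hp0.ne', ENNReal.rpow_one]
      congr 1
      rw [ENNReal.ofReal_rpow_of_pos (div_pos (Real.rpow_pos_of_pos hx0 a) ha)]
      congr 2
      rw [← hpdivq]; ring
    have hre : (x ^ a / a) ^ (p - 1) * x ^ (-b - 1) = a ^ (1 - p) * x ^ (-a - 1) := by
      rw [Real.div_rpow (Real.rpow_nonneg hx0.le a) ha.le, ← Real.rpow_mul hx0.le,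
        div_mul_eq_mul_div, ← Real.rpow_add hx0]
      have e1 : a * (p - 1) + (-b - 1) = -a - 1 := by
        rw [mul_sub, mul_one, hap]; ring
      rw [e1, div_eq_mul_inv, ← Real.rpow_neg ha.le (p - 1)]
      have e2 : -(p - 1) = 1 - p := by ring
      rw [e2, mul_comm]
    calc (∫⁻ t in Ioc (0:ℝ) x, g t) ^ p * ENNReal.ofReal (x ^ (-b - 1))
        ≤ ((∫⁻ t in Ioc (0:ℝ) x, H t) ^ (1/p) * ENNReal.ofReal (x ^ a / a) ^ (1/q)) ^ p
            * ENNReal.ofReal (x ^ (-b - 1)) := mul_le_mul_left h2 _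
      _ = (∫⁻ t in Ioc (0:ℝ) x, H t)
            * (ENNReal.ofReal ((x ^ a / a) ^ (p - 1)) * ENNReal.ofReal (x ^ (-b - 1))) := by
          rw [hrw, mul_assoc]
      _ = ENNReal.ofReal (a ^ (1 - p)) * ((∫⁻ t in Ioc (0:ℝ) x, H t) * V x) := by
          rw [← ENNReal.ofReal_mul (Real.rpow_nonneg (div_nonneg (Real.rpow_nonneg hx0.le a) ha.le) _),
            hre, ENNReal.ofReal_mul (Real.rpow_nonneg ha.le _)]
          ring
  have step1 : L ≤ ENNReal.ofReal (a ^ (1 - p))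
      * ∫⁻ x in Ioi (0:ℝ), (∫⁻ t in Ioc (0:ℝ) x, H t) * V x := by
    rw [← lintegral_const_mul' _ _ ENNReal.ofReal_ne_top]
    exact lintegral_mono_ae
      (by filter_upwards [ae_restrict_mem measurableSet_Ioi] with x hx using key x hx)
  have step2 : ∫⁻ x in Ioi (0:ℝ), (∫⁻ t in Ioc (0:ℝ) x, H t) * V x
      = ∫⁻ t in Ioi (0:ℝ), H t * ∫⁻ x in Ioi t, V x := hardy_swap H V hH hV
  have step3 : ∫⁻ t in Ioi (0:ℝ), H t * ∫⁻ x in Ioi t, V x = ENNReal.ofReal (1/a) * R := by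
    rw [hR_def, ← lintegral_const_mul' _ _ ENNReal.ofReal_ne_top]
    refine setLIntegral_congr_fun measurableSet_Ioi (fun t ht => ?_)
    have ht0 : (0:ℝ) < t := ht
    have hVint : ∫⁻ x in Ioi t, V x = ENNReal.ofReal (t ^ (-a) / a) := hardy_lint_Ioi ha ht0
    rw [hVint]
    show g t ^ p * ENNReal.ofReal (t ^ (β * p)) * ENNReal.ofReal (t ^ (-a) / a)
      = ENNReal.ofReal (1/a) * (g t ^ p * ENNReal.ofReal (t ^ (p - b - 1)))
    rw [mul_assoc, ← ENNReal.ofReal_mul (Real.rpow_nonneg ht0.le _)]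
    have e3 : t ^ (β * p) * (t ^ (-a) / a) = (1/a) * t ^ (p - b - 1) := by
      rw [div_eq_mul_inv, ← mul_assoc, ← Real.rpow_add ht0]
      have e4 : β * p + -a = p - b - 1 := by
        rw [hβp]; linear_combination -hap
      rw [e4, one_div, mul_comm]
    rw [e3, ENNReal.ofReal_mul (by positivity)]
    ring
  have step4 : L ≤ ENNReal.ofReal ((p/b) ^ p) * R := by
    have : L ≤ ENNReal.ofReal (a ^ (1 - p)) * (ENNReal.ofReal (1/a) * R) := by
      rw [← step3, ← step2]; exact step1
    refine this.trans_eq ?_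
    rw [← mul_assoc, ← ENNReal.ofReal_mul (Real.rpow_nonneg ha.le _)]
    congr 2
    have e5 : a ^ (1 - p) * (1/a) = a ^ (-p) := by
      rw [one_div, ← Real.rpow_neg_one a, ← Real.rpow_add ha]
      congr 1
      ring
    rw [e5, ha_def, Real.rpow_neg (div_nonneg hb.le hp0.le),
      ← Real.inv_rpow (div_nonneg hb.le hp0.le), inv_div]
  have final := ENNReal.rpow_le_rpow step4 (le_of_lt (by positivity : (0:ℝ) < 1/p))
  refine final.trans_eq ?_
  rw [ENNReal.mul_rpow_of_nonneg _ _ (by positivity : (0:ℝ) ≤ 1/p)]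
  congr 1
  rw [ENNReal.ofReal_rpow_of_pos (by positivity), ← Real.rpow_mul (div_nonneg hp0.le hb.le),
    mul_one_div_cancel hp0.ne', Real.rpow_one]
end

section
/- Let s, ψ be measurable on [0,1] with ψ ≥ 0, ω ∈ W_α, 1 < p < ∞, 1/p + 1/q = 1. Assume ∫₀¹ |s(t)|^{-(n+α)/p} ψ(t) dt < ∞ and t^β ≤ |s(t)| ≤ t^{-γ} a.e. for some β, γ > 0. Then for all f ∈ L^p(ω) and g ∈ L^q(ω): ∫_{ℝⁿ} g(x) U_{ψ,s}f(x) ω(x) dx = ∫_{ℝⁿ} f(y) V_{|s(·)|^{-α}ψ, 1/s} g(y) ω(y) dy. -/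
open MeasureTheory Metric Set

noncomputable section

namespace HardyCesaroAux

open ENNReal Filter

variable {n : ℕ} {α : ℝ} {ω : EuclideanSpace ℝ (Fin n) → ℝ}

/-- Scaling change of variables for lower integrals on `ℝⁿ`. -/
lemma lintegral_comp_smul {c : ℝ} (hc : c ≠ 0) {H : EuclideanSpace ℝ (Fin n) → ℝ≥0∞}
    (hH : AEMeasurable H (volume : Measure (EuclideanSpace ℝ (Fin n)))) :
    ∫⁻ x, H (c • x) = ENNReal.ofReal (|c| ^ (-(n : ℝ))) * ∫⁻ y, H y := by
  have hmap := Measure.map_addHaar_smul (volume : Measure (EuclideanSpace ℝ (Fin n))) hc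
  have h1 : ∫⁻ x, H (c • x) = ∫⁻ a, H a ∂(Measure.map (c • ·) (volume : Measure (EuclideanSpace ℝ (Fin n)))) := by
    refine (lintegral_map' ?_ ((measurable_const_smul c).aemeasurable)).symm
    rw [hmap]
    exact hH.smul_measure _
  rw [h1, hmap, lintegral_smul_measure]
  congr 1
  rw [finrank_euclideanSpace_fin, abs_inv, abs_pow,
    ← Real.rpow_natCast |c| n, ← Real.rpow_neg (abs_nonneg c)]

/-- Bochner change of variables with the homogeneous weight. -/
lemma integral_smul_weight (hω : IsWeight n α ω) {c : ℝ} (hc : c ≠ 0)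
    (F G : EuclideanSpace ℝ (Fin n) → ℝ) :
    ∫ x, G x * F (c • x) * ω x
      = |c| ^ (-((n : ℝ) + α)) * ∫ y, F y * G (c⁻¹ • y) * ω y := by
  have habs : (0 : ℝ) < |c| := abs_pos.mpr hc
  have hrp : (0 : ℝ) < |c| ^ α := Real.rpow_pos_of_pos habs α
  have h1 : ∀ x, G x * F (c • x) * ω x
      = |c| ^ (-α) * ((fun y => F y * G (c⁻¹ • y) * ω y) (c • x)) := by
    intro x
    simp only
    rw [smul_smul, inv_mul_cancel₀ hc, one_smul, hω.homog c hc x,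
      Real.rpow_neg (abs_nonneg c)]
    have h2 : (|c| ^ α)⁻¹ * (F (c • x) * G x * (|c| ^ α * ω x))
        = ((|c| ^ α)⁻¹ * |c| ^ α) * (F (c • x) * G x * ω x) := by ring
    rw [h2, inv_mul_cancel₀ hrp.ne', one_mul]
    ring
  calc ∫ x, G x * F (c • x) * ω x
      = ∫ x, |c| ^ (-α) * ((fun y => F y * G (c⁻¹ • y) * ω y) (c • x)) :=
        integral_congr_ae (Eventually.of_forall h1)
    _ = |c| ^ (-α) * ∫ x, (fun y => F y * G (c⁻¹ • y) * ω y) (c • x) :=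
        integral_const_mul _ _
    _ = |c| ^ (-α) * (|(c ^ Module.finrank ℝ (EuclideanSpace ℝ (Fin n)))⁻¹| •
          ∫ y, F y * G (c⁻¹ • y) * ω y) := by
        rw [MeasureTheory.Measure.integral_comp_smul volume (fun y => F y * G (c⁻¹ • y) * ω y) c]
    _ = |c| ^ (-((n : ℝ) + α)) * ∫ y, F y * G (c⁻¹ • y) * ω y := by
        rw [smul_eq_mul, finrank_euclideanSpace_fin, abs_inv, abs_pow,
          ← Real.rpow_natCast |c| n, ← Real.rpow_neg (abs_nonneg c), ← mul_assoc,
          ← Real.rpow_add habs, show (-α) + (-(n : ℝ)) = -((n : ℝ) + α) by ring]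

/-- Finiteness of the weighted `L^r` lower integral. -/
lemma lint_lt_top (hω : IsWeight n α ω) {F : EuclideanSpace ℝ (Fin n) → ℝ} {r : ℝ}
    (hr : 0 ≤ r) (h : Integrable (fun x => |F x| ^ r * ω x)) :
    ∫⁻ x, ENNReal.ofReal |F x| ^ r * ENNReal.ofReal (ω x) < ⊤ := by
  refine lt_of_eq_of_lt ?_ ((hasFiniteIntegral_iff_norm _).mp h.2)
  refine lintegral_congr_ae ?_
  filter_upwards [hω.pos] with x hx
  rw [Real.norm_eq_abs,
    abs_of_nonneg (mul_nonneg (Real.rpow_nonneg (abs_nonneg _) _) hx.le),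
    ENNReal.ofReal_mul (Real.rpow_nonneg (abs_nonneg _) _),
    ENNReal.ofReal_rpow_of_nonneg (abs_nonneg _) hr]

lemma weight_eq (hω : IsWeight n α ω) {c : ℝ} (hc : c ≠ 0) (x : EuclideanSpace ℝ (Fin n)) :
    ω x = |c| ^ (-α) * ω (c • x) := by
  have habs : (0 : ℝ) < |c| := abs_pos.mpr hc
  rw [hω.homog c hc x, Real.rpow_neg (abs_nonneg c), ← mul_assoc,
    inv_mul_cancel₀ (Real.rpow_pos_of_pos habs α).ne', one_mul]

/-- The Hölder-type bound, for each fixed scaling factor `c ≠ 0`. -/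
lemma holder_bound {p q : ℝ} (hpq : Real.HolderConjugate p q) (hω : IsWeight n α ω)
    {F G : EuclideanSpace ℝ (Fin n) → ℝ}
    (hF : AEMeasurable F (volume : Measure (EuclideanSpace ℝ (Fin n))))
    (hG : AEMeasurable G (volume : Measure (EuclideanSpace ℝ (Fin n))))
    {c : ℝ} (hc : c ≠ 0) :
    ∫⁻ x, ENNReal.ofReal |G x| * ENNReal.ofReal |F (c • x)| * ENNReal.ofReal (ω x)
      ≤ (∫⁻ x, ENNReal.ofReal |G x| ^ q * ENNReal.ofReal (ω x)) ^ (1/q) *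
        (ENNReal.ofReal (|c| ^ (-((n : ℝ) + α) / p)) *
          (∫⁻ x, ENNReal.ofReal |F x| ^ p * ENNReal.ofReal (ω x)) ^ (1/p)) := by
  have habs : (0 : ℝ) < |c| := abs_pos.mpr hc
  set a : EuclideanSpace ℝ (Fin n) → ℝ≥0∞ :=
    fun x => ENNReal.ofReal |G x| * ENNReal.ofReal (ω x) ^ (1/q) with ha
  set b : EuclideanSpace ℝ (Fin n) → ℝ≥0∞ :=
    fun x => ENNReal.ofReal |F (c • x)| * ENNReal.ofReal (ω x) ^ (1/p) with hb
  have hFc : AEMeasurable (fun x => F (c • x)) (volume : Measure (EuclideanSpace ℝ (Fin n))) :=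
    hF.comp_quasiMeasurePreserving (Measure.quasiMeasurePreserving_smul _ hc)
  have hGabs : AEMeasurable (fun x => ENNReal.ofReal |G x|)
      (volume : Measure (EuclideanSpace ℝ (Fin n))) :=
    (ENNReal.measurable_ofReal.comp measurable_abs).comp_aemeasurable hG
  have hFabs : AEMeasurable (fun x => ENNReal.ofReal |F x|)
      (volume : Measure (EuclideanSpace ℝ (Fin n))) :=
    (ENNReal.measurable_ofReal.comp measurable_abs).comp_aemeasurable hF
  have hFcabs : AEMeasurable (fun x => ENNReal.ofReal |F (c • x)|)
      (volume : Measure (EuclideanSpace ℝ (Fin n))) :=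
    (ENNReal.measurable_ofReal.comp measurable_abs).comp_aemeasurable hFc
  have haM : AEMeasurable a volume :=
    hGabs.mul (hω.measurable.ennreal_ofReal.pow_const _).aemeasurable
  have hbM : AEMeasurable b volume :=
    hFcabs.mul (hω.measurable.ennreal_ofReal.pow_const _).aemeasurable
  have step0 : ∫⁻ x, ENNReal.ofReal |G x| * ENNReal.ofReal |F (c • x)| * ENNReal.ofReal (ω x)
      = ∫⁻ x, (a * b) x := by
    refine lintegral_congr_ae ?_
    filter_upwards [hω.pos] with x hx
    have hz : ENNReal.ofReal (ω x) ≠ 0 := (ENNReal.ofReal_pos.mpr hx).ne'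
    have hcomb : ENNReal.ofReal (ω x) ^ (1/q) * ENNReal.ofReal (ω x) ^ (1/p)
        = ENNReal.ofReal (ω x) := by
      rw [← ENNReal.rpow_add _ _ hz ENNReal.ofReal_ne_top,
        show 1/q + 1/p = 1 by
          have := hpq.inv_add_inv_eq_one
          rw [one_div, one_div]; linarith,
        ENNReal.rpow_one]
    simp only [Pi.mul_apply, ha, hb]
    calc ENNReal.ofReal |G x| * ENNReal.ofReal |F (c • x)| * ENNReal.ofReal (ω x)
        = ENNReal.ofReal |G x| * ENNReal.ofReal |F (c • x)| *
            (ENNReal.ofReal (ω x) ^ (1/q) * ENNReal.ofReal (ω x) ^ (1/p)) := by rw [hcomb]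
      _ = ENNReal.ofReal |G x| * ENNReal.ofReal (ω x) ^ (1/q) *
            (ENNReal.ofReal |F (c • x)| * ENNReal.ofReal (ω x) ^ (1/p)) := by ring
  have step1 := ENNReal.lintegral_mul_le_Lp_mul_Lq
    (volume : Measure (EuclideanSpace ℝ (Fin n))) hpq.symm haM hbM
  have step2 : ∫⁻ x, a x ^ q = ∫⁻ x, ENNReal.ofReal |G x| ^ q * ENNReal.ofReal (ω x) := by
    refine lintegral_congr fun x => ?_
    simp only [ha]
    rw [ENNReal.mul_rpow_of_nonneg _ _ hpq.symm.nonneg, ← ENNReal.rpow_mul,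
      one_div_mul_cancel hpq.symm.ne_zero, ENNReal.rpow_one]
  have hcomp : ∫⁻ x, ENNReal.ofReal |F (c • x)| ^ p * ENNReal.ofReal (ω (c • x))
      = ENNReal.ofReal (|c| ^ (-(n : ℝ))) *
        ∫⁻ y, ENNReal.ofReal |F y| ^ p * ENNReal.ofReal (ω y) :=
    lintegral_comp_smul hc
      ((hFabs.pow_const _).mul hω.measurable.ennreal_ofReal.aemeasurable)
  have step3 : ∫⁻ x, b x ^ p
      = ENNReal.ofReal (|c| ^ (-((n : ℝ) + α))) *
        ∫⁻ x, ENNReal.ofReal |F x| ^ p * ENNReal.ofReal (ω x) := by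
    have hcongr : ∫⁻ x, b x ^ p
        = ∫⁻ x, ENNReal.ofReal (|c| ^ (-α)) *
            (ENNReal.ofReal |F (c • x)| ^ p * ENNReal.ofReal (ω (c • x))) := by
      refine lintegral_congr fun x => ?_
      simp only [hb]
      rw [ENNReal.mul_rpow_of_nonneg _ _ hpq.nonneg, ← ENNReal.rpow_mul,
        one_div_mul_cancel hpq.ne_zero, ENNReal.rpow_one, weight_eq hω hc x,
        ENNReal.ofReal_mul (Real.rpow_nonneg (abs_nonneg c) _)]
      ring
    rw [show -((n : ℝ) + α) = (-α) + (-(n : ℝ)) by ring, hcongr,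
      lintegral_const_mul' _ _ ENNReal.ofReal_ne_top, hcomp, ← mul_assoc,
      ← ENNReal.ofReal_mul (Real.rpow_nonneg (abs_nonneg c) _), ← Real.rpow_add habs]
  have step4 : (∫⁻ x, b x ^ p) ^ (1/p)
      = ENNReal.ofReal (|c| ^ (-((n : ℝ) + α) / p)) *
        (∫⁻ x, ENNReal.ofReal |F x| ^ p * ENNReal.ofReal (ω x)) ^ (1/p) := by
    rw [step3, ENNReal.mul_rpow_of_nonneg _ _ (one_div_nonneg.mpr hpq.nonneg),
      ENNReal.ofReal_rpow_of_pos (Real.rpow_pos_of_pos habs _),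
      ← Real.rpow_mul (abs_nonneg c), mul_one_div]
  calc ∫⁻ x, ENNReal.ofReal |G x| * ENNReal.ofReal |F (c • x)| * ENNReal.ofReal (ω x)
      = ∫⁻ x, (a * b) x := step0
    _ ≤ (∫⁻ x, a x ^ q) ^ (1/q) * (∫⁻ x, b x ^ p) ^ (1/p) := step1
    _ = (∫⁻ x, ENNReal.ofReal |G x| ^ q * ENNReal.ofReal (ω x)) ^ (1/q) *
        (ENNReal.ofReal (|c| ^ (-((n : ℝ) + α) / p)) *
          (∫⁻ x, ENNReal.ofReal |F x| ^ p * ENNReal.ofReal (ω x)) ^ (1/p)) := by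
        rw [step2, step4]

/-- The master Fubini lemma. -/
lemma key {p q : ℝ} (hpq : Real.HolderConjugate p q) (hω : IsWeight n α ω)
    {F G : EuclideanSpace ℝ (Fin n) → ℝ}
    (hF : AEMeasurable F (volume : Measure (EuclideanSpace ℝ (Fin n))))
    (hG : AEMeasurable G (volume : Measure (EuclideanSpace ℝ (Fin n))))
    (hFp : Integrable (fun x => |F x| ^ p * ω x)) (hGq : Integrable (fun x => |G x| ^ q * ω x))
    {c w : ℝ → ℝ} (hc : Measurable c) (hwm : Measurable w)
    (hw : 0 ≤ᵐ[volume.restrict (Icc (0:ℝ) 1)] w)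
    (hc0 : ∀ᵐ t ∂(volume.restrict (Icc (0:ℝ) 1)), c t ≠ 0)
    (hI : IntegrableOn (fun t => |c t| ^ (-((n : ℝ) + α) / p) * w t) (Icc (0:ℝ) 1)) :
    ∫ x, G x * (∫ t in Icc (0:ℝ) 1, F (c t • x) * w t) * ω x
      = ∫ t in Icc (0:ℝ) 1, w t * ∫ x, G x * F (c t • x) * ω x := by
  have hp0 : (0:ℝ) ≤ p := hpq.nonneg
  have hq0 : (0:ℝ) ≤ q := hpq.symm.nonneg
  set μ : Measure ℝ := volume.restrict (Icc (0:ℝ) 1) with hμ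
  set ν : Measure (EuclideanSpace ℝ (Fin n)) := volume with hν
  set k : ℝ → EuclideanSpace ℝ (Fin n) → ℝ := fun t x => G x * F (c t • x) * w t * ω x with hk
  set Bp : ℝ≥0∞ := ∫⁻ x, ENNReal.ofReal |F x| ^ p * ENNReal.ofReal (ω x) with hBp
  set Bq : ℝ≥0∞ := ∫⁻ x, ENNReal.ofReal |G x| ^ q * ENNReal.ofReal (ω x) with hBq
  have hBpf : Bp < ⊤ := lint_lt_top hω hp0 hFp
  have hBqf : Bq < ⊤ := lint_lt_top hω hq0 hGq
  have hφ : Measurable fun z : ℝ × EuclideanSpace ℝ (Fin n) => c z.1 • z.2 :=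
    (hc.comp measurable_fst).smul measurable_snd
  have hac : Measure.map (fun z : ℝ × EuclideanSpace ℝ (Fin n) => c z.1 • z.2) (μ.prod ν) ≪ ν := by
    refine Measure.AbsolutelyContinuous.mk fun N hN hN0 => ?_
    rw [Measure.map_apply hφ hN, Measure.prod_apply (hφ hN)]
    have hz : ∀ᵐ t ∂μ,
        ν (Prod.mk t ⁻¹' ((fun z : ℝ × EuclideanSpace ℝ (Fin n) => c z.1 • z.2) ⁻¹' N)) = 0 := by
      filter_upwards [hc0] with t ht
      have heq : Prod.mk t ⁻¹' ((fun z : ℝ × EuclideanSpace ℝ (Fin n) => c z.1 • z.2) ⁻¹' N)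
          = (c t • ·) ⁻¹' N := rfl
      rw [heq]
      exact (Measure.quasiMeasurePreserving_smul ν ht).preimage_null hN0
    rw [lintegral_congr_ae hz, lintegral_zero]
  have hqmp : Measure.QuasiMeasurePreserving
      (fun z : ℝ × EuclideanSpace ℝ (Fin n) => c z.1 • z.2) (μ.prod ν) ν := ⟨hφ, hac⟩
  have hKm : AEMeasurable (Function.uncurry k) (μ.prod ν) := by
    have h1 : AEMeasurable (fun z : ℝ × EuclideanSpace ℝ (Fin n) => G z.2) (μ.prod ν) :=
      hG.comp_quasiMeasurePreserving Measure.quasiMeasurePreserving_snd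
    have h2 : AEMeasurable (fun z : ℝ × EuclideanSpace ℝ (Fin n) => F (c z.1 • z.2)) (μ.prod ν) :=
      hF.comp_quasiMeasurePreserving hqmp
    exact ((h1.mul h2).mul ((hwm.comp measurable_fst).aemeasurable)).mul
      ((hω.measurable.comp measurable_snd).aemeasurable)
  have hC : Bq ^ (1/q) * Bp ^ (1/p) < ⊤ :=
    ENNReal.mul_lt_top
      (ENNReal.rpow_lt_top_of_nonneg (one_div_nonneg.mpr hq0) hBqf.ne)
      (ENNReal.rpow_lt_top_of_nonneg (one_div_nonneg.mpr hp0) hBpf.ne)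
  have hIfin : ∫⁻ t, ENNReal.ofReal (|c t| ^ (-((n : ℝ) + α) / p) * w t) ∂μ < ⊤ := by
    refine lt_of_eq_of_lt ?_ ((hasFiniteIntegral_iff_norm _).mp hI.2)
    refine lintegral_congr_ae ?_
    filter_upwards [hw] with t htw
    rw [Real.norm_eq_abs,
      abs_of_nonneg (mul_nonneg (Real.rpow_nonneg (abs_nonneg _) _) htw)]
  have hfin : HasFiniteIntegral (Function.uncurry k) (μ.prod ν) := by
    rw [hasFiniteIntegral_def]
    simp only [enorm_eq_nnnorm]
    have htonelli : ∫⁻ z, (‖Function.uncurry k z‖₊ : ℝ≥0∞) ∂(μ.prod ν)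
        = ∫⁻ t, ∫⁻ x, (‖k t x‖₊ : ℝ≥0∞) ∂ν ∂μ := lintegral_prod _ hKm.enorm
    rw [htonelli]
    have hbound : ∀ᵐ t ∂μ, ∫⁻ x, (‖k t x‖₊ : ℝ≥0∞) ∂ν
        ≤ ENNReal.ofReal (|c t| ^ (-((n : ℝ) + α) / p) * w t) * (Bq ^ (1/q) * Bp ^ (1/p)) := by
      filter_upwards [hc0, hw] with t htc htw
      have h1 : ∫⁻ x, (‖k t x‖₊ : ℝ≥0∞) ∂ν
          = ENNReal.ofReal (w t) *
            ∫⁻ x, ENNReal.ofReal |G x| * ENNReal.ofReal |F (c t • x)| *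
              ENNReal.ofReal (ω x) ∂ν := by
        rw [← lintegral_const_mul' _ _ ENNReal.ofReal_ne_top]
        refine lintegral_congr_ae ?_
        filter_upwards [hω.pos] with x hx
        simp only [hk]
        rw [← enorm_eq_nnnorm, Real.enorm_eq_ofReal_abs, abs_mul, abs_mul, abs_mul,
          abs_of_nonneg htw, abs_of_nonneg hx.le,
          ENNReal.ofReal_mul (mul_nonneg (mul_nonneg (abs_nonneg _) (abs_nonneg _)) htw),
          ENNReal.ofReal_mul (mul_nonneg (abs_nonneg _) (abs_nonneg _)),
          ENNReal.ofReal_mul (abs_nonneg _)]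
        ring
      rw [h1]
      calc ENNReal.ofReal (w t) *
            ∫⁻ x, ENNReal.ofReal |G x| * ENNReal.ofReal |F (c t • x)| *
              ENNReal.ofReal (ω x) ∂ν
          ≤ ENNReal.ofReal (w t) * (Bq ^ (1/q) *
              (ENNReal.ofReal (|c t| ^ (-((n : ℝ) + α) / p)) * Bp ^ (1/p))) :=
            mul_le_mul_right (holder_bound hpq hω hF hG htc) _
        _ = ENNReal.ofReal (|c t| ^ (-((n : ℝ) + α) / p) * w t) * (Bq ^ (1/q) * Bp ^ (1/p)) := by
            rw [ENNReal.ofReal_mul (Real.rpow_nonneg (abs_nonneg _) _)]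
            ring
    calc ∫⁻ t, ∫⁻ x, (‖k t x‖₊ : ℝ≥0∞) ∂ν ∂μ
        ≤ ∫⁻ t, ENNReal.ofReal (|c t| ^ (-((n : ℝ) + α) / p) * w t) *
            (Bq ^ (1/q) * Bp ^ (1/p)) ∂μ := lintegral_mono_ae hbound
      _ = (∫⁻ t, ENNReal.ofReal (|c t| ^ (-((n : ℝ) + α) / p) * w t) ∂μ) *
            (Bq ^ (1/q) * Bp ^ (1/p)) := lintegral_mul_const' _ _ hC.ne
      _ < ⊤ := ENNReal.mul_lt_top hIfin hC
  have hK : Integrable (Function.uncurry k) (μ.prod ν) := ⟨hKm.aestronglyMeasurable, hfin⟩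
  have hswap := integral_integral_swap hK
  have hL : ∫ x, G x * (∫ t, F (c t • x) * w t ∂μ) * ω x
      = ∫ x, ∫ t, k t x ∂μ ∂ν := by
    refine integral_congr_ae (Eventually.of_forall fun x => ?_)
    show G x * (∫ t, F (c t • x) * w t ∂μ) * ω x = ∫ t, k t x ∂μ
    have hpt : ∫ t, k t x ∂μ = (G x * ω x) * ∫ t, F (c t • x) * w t ∂μ := by
      rw [← integral_const_mul]
      refine integral_congr_ae (Eventually.of_forall fun t => ?_)
      simp only [hk]
      ring
    rw [hpt]
    ring
  have hR : ∀ t, ∫ x, k t x ∂ν = w t * ∫ x, G x * F (c t • x) * ω x := by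
    intro t
    rw [← integral_const_mul]
    refine integral_congr_ae (Eventually.of_forall fun x => ?_)
    simp only [hk]
    ring
  rw [hL, ← hswap]
  exact integral_congr_ae (Eventually.of_forall fun t => hR t)

end HardyCesaroAux

/-- Mutual adjointness of `U_{ψ,s}` and `V_{|s(·)|^{-α}ψ, 1/s}` on weighted spaces:
`∫ g · U_{ψ,s}f · ω = ∫ f · V_{|s(·)|^{-α}ψ,1/s} g · ω`. -/
theorem hardyCesaro_adjoint {n : ℕ} (hn : 1 ≤ n) {α p q β γ : ℝ} (hp : 1 < p)
    (hpq : 1 / p + 1 / q = 1)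
    {ω : EuclideanSpace ℝ (Fin n) → ℝ} (hω : IsWeight n α ω)
    {ψ s : ℝ → ℝ} (hψm : Measurable ψ) (hψ : ∀ t ∈ Icc (0 : ℝ) 1, 0 ≤ ψ t)
    (hsm : Measurable s)
    (hA : IntegrableOn (fun t => |s t| ^ (-((n : ℝ) + α) / p) * ψ t) (Icc (0 : ℝ) 1))
    (hβ : 0 < β) (hγ : 0 < γ)
    (hs : ∀ᵐ t ∂(volume.restrict (Icc (0 : ℝ) 1)), t ^ β ≤ |s t| ∧ |s t| ≤ t ^ (-γ))
    (f g : EuclideanSpace ℝ (Fin n) → ℝ) (hf : MemWLp ω p f) (hg : MemWLp ω q g) :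
    ∫ x, g x * hardyCesaro ψ s f x * ω x =
      ∫ y, f y * cesaro (fun t => |s t| ^ (-α) * ψ t) (fun t => (s t)⁻¹) g y * ω y := by
  classical
  obtain ⟨hfm, hfp⟩ := hf
  obtain ⟨hgm, hgq⟩ := hg
  have hp0 : (0:ℝ) < p := lt_trans one_pos hp
  have hq1 : 1/q = 1 - 1/p := by linarith
  have hpinv1 : 1/p < 1 := by rw [div_lt_one hp0]; exact hp
  have hqinv : 0 < 1/q := by rw [hq1]; linarith
  have hq0 : 0 < q := by
    rcases lt_trichotomy q 0 with h|h|h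
    · exact absurd (div_neg_of_pos_of_neg one_pos h) (by linarith)
    · rw [h] at hqinv; simp at hqinv
    · exact h
  have hconj : Real.HolderConjugate p q := Real.holderConjugate_iff.mpr ⟨hp, by rw [← one_div, ← one_div]; exact hpq⟩
  have hmem : ∀ᵐ t ∂(volume.restrict (Icc (0:ℝ) 1)), t ∈ Icc (0:ℝ) 1 :=
    ae_restrict_mem measurableSet_Icc
  have h0 : ∀ᵐ t ∂(volume.restrict (Icc (0:ℝ) 1)), t ≠ 0 := by
    refine ae_iff.mpr ?_
    have hset : {t : ℝ | ¬ t ≠ 0} = {0} := by ext t; simp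
    rw [hset, Measure.restrict_apply (measurableSet_singleton 0)]
    exact measure_mono_null inter_subset_left (measure_singleton 0)
  have hc0 : ∀ᵐ t ∂(volume.restrict (Icc (0:ℝ) 1)), s t ≠ 0 := by
    filter_upwards [hs, h0, hmem] with t hst ht0 htm
    have htpos : 0 < t := lt_of_le_of_ne htm.1 (Ne.symm ht0)
    have habs : 0 < |s t| := lt_of_lt_of_le (Real.rpow_pos_of_pos htpos β) hst.1
    exact abs_pos.mp habs
  have hψae : 0 ≤ᵐ[volume.restrict (Icc (0:ℝ) 1)] ψ := by
    filter_upwards [hmem] with t ht using hψ t ht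
  have key1 := HardyCesaroAux.key hconj hω hfm hgm hfp hgq hsm hψm hψae hc0 hA
  set w' : ℝ → ℝ := fun t => |(s t)⁻¹| ^ (n:ℝ) * (|s t| ^ (-α) * ψ t) with hw'
  have hw'm : Measurable w' :=
    (hsm.inv.abs.pow_const _).mul ((hsm.abs.pow_const _).mul hψm)
  have hw'0 : 0 ≤ᵐ[volume.restrict (Icc (0:ℝ) 1)] w' := by
    filter_upwards [hmem] with t ht
    have h1 := hψ t ht
    have h2 : (0:ℝ) ≤ |(s t)⁻¹| ^ (n:ℝ) := Real.rpow_nonneg (abs_nonneg _) _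
    have h3 : (0:ℝ) ≤ |s t| ^ (-α) := Real.rpow_nonneg (abs_nonneg _) _
    simp only [hw']
    positivity
  have hc0' : ∀ᵐ t ∂(volume.restrict (Icc (0:ℝ) 1)), (fun t => (s t)⁻¹) t ≠ 0 := by
    filter_upwards [hc0] with t ht using inv_ne_zero ht
  have hI' : IntegrableOn
      (fun t => |(fun t => (s t)⁻¹) t| ^ (-((n:ℝ) + α) / q) * w' t) (Icc (0:ℝ) 1) := by
    refine hA.congr ?_
    filter_upwards [hc0] with t ht
    have hu : 0 < |s t| := abs_pos.mpr ht
    simp only [hw']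
    have comb : ∀ a b cc : ℝ, |s t| ^ a * (|s t| ^ b * (|s t| ^ cc * ψ t))
        = |s t| ^ (a + b + cc) * ψ t := by
      intro a b cc
      rw [Real.rpow_add hu, Real.rpow_add hu]
      ring
    rw [abs_inv, Real.inv_rpow (abs_nonneg _), ← Real.rpow_neg (abs_nonneg _),
      Real.inv_rpow (abs_nonneg _), ← Real.rpow_neg (abs_nonneg _), comb,
      show -(-((n:ℝ) + α) / q) + -(n:ℝ) + -α = -((n:ℝ) + α) / p by
        have h1p : (1:ℝ)/p = 1 - 1/q := by linarith
        rw [show -((n:ℝ) + α) / p = (-((n:ℝ) + α)) * (1/p) by ring, h1p]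
        ring]
  have key2 := HardyCesaroAux.key hconj.symm hω hgm hfm hgq hfp
    (hsm.inv) hw'm hw'0 hc0' hI'
  have e1 : ∫ x, g x * hardyCesaro ψ s f x * ω x
      = ∫ t in Icc (0:ℝ) 1, ψ t * ∫ x, g x * f (s t • x) * ω x := key1
  have e2 : ∫ y, f y * cesaro (fun t => |s t| ^ (-α) * ψ t) (fun t => (s t)⁻¹) g y * ω y
      = ∫ t in Icc (0:ℝ) 1, w' t * ∫ y, f y * g ((s t)⁻¹ • y) * ω y := key2
  rw [e1, e2]
  refine integral_congr_ae ?_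
  filter_upwards [hc0] with t ht
  have hu : 0 < |s t| := abs_pos.mpr ht
  rw [HardyCesaroAux.integral_smul_weight hω ht f g]
  have hwt : w' t = |s t| ^ (-((n:ℝ) + α)) * ψ t := by
    simp only [hw']
    rw [abs_inv, Real.inv_rpow (abs_nonneg _), ← Real.rpow_neg (abs_nonneg _),
      ← mul_assoc, ← Real.rpow_add hu,
      show -(n:ℝ) + -α = -((n:ℝ) + α) by ring]
  rw [hwt]
  ring

end
end
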